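/- Let $k$ be a commutative ring, $A$ a commutative $k$-algebra, and $M$ an $A$-module. Suppose $d_0 : A \to M$ is a $k$-linear derivation and $d_1 : M \to \Lambda^2_A M$ is a $k$-linear map satisfying the Leibniz rule $d_1(a \cdot m) = a \cdot d_1(m) + d_0(a) \wedge m$ for all $a \in A$, $m \in M$. Then there is a unique family of $k$-linear maps $d_i : \Lambda^i_A M \to \Lambda^{i+1}_A M$ extending $d_0$ and $d_1$ such that $d_{i+j}(\omega \wedge \eta) = d_i(\omega) \wedge \eta + (-1)^i \omega \wedge d_j(\eta)$ for $\omega \in \Lambda^i_A M$, $\eta \in \Lambda^j_A M$. -/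

import Mathlib

open ExteriorAlgebra

/-- The submodule of degree-`i` elements (the `i`-th exterior power) inside the
exterior algebra of the `A`-module `M`. -/
noncomputable def degreePiece (A M : Type*) [CommRing A] [AddCommGroup M] [Module A M]
    (i : ℕ) : Submodule A (ExteriorAlgebra A M) :=
  (LinearMap.range (ExteriorAlgebra.ι A : M →ₗ[A] ExteriorAlgebra A M)) ^ i

section Aux

variable {A M : Type} [CommRing A] [AddCommGroup M] [Module A M]

theorem ι_mul_eq_involute_mul (v : M) (x : ExteriorAlgebra A M) :
    ι A v * x = CliffordAlgebra.involute x * ι A v := by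
  induction x using ExteriorAlgebra.induction with
  | algebraMap r => rw [AlgHom.commutes]; exact (Algebra.commutes r _).symm
  | ι m =>
    rw [CliffordAlgebra.involute_ι, neg_mul, eq_neg_iff_add_eq_zero]
    exact ι_add_mul_swap v m
  | mul x y hx hy =>
    rw [map_mul, ← mul_assoc, hx, mul_assoc, hy, ← mul_assoc]
  | add x y hx hy => rw [map_add, mul_add, add_mul, hx, hy]

theorem involute_of_mem_pow {i : ℕ} {x : ExteriorAlgebra A M} (hx : x ∈ degreePiece A M i) :
    CliffordAlgebra.involute x = ((-1 : ℤ) ^ i) • x := by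
  unfold degreePiece at hx
  induction hx using Submodule.pow_induction_on_left' with
  | algebraMap r => simp
  | add x y i hx hy ihx ihy => rw [map_add, ihx, ihy, smul_add]
  | mem_mul m hm i x hx ih =>
    obtain ⟨v, rfl⟩ := hm
    rw [map_mul, CliffordAlgebra.involute_ι, ih, pow_succ, mul_comm _ (-1 : ℤ),
      mul_smul, neg_mul, neg_smul, one_smul, mul_smul_comm]

end Aux

section DAlg

variable (A M : Type) [CommRing A] [AddCommGroup M] [Module A M]

/-- The exterior algebra extended by a twisted square-zero copy of itself. -/
def DAlg : Type := ExteriorAlgebra A M × ExteriorAlgebra A M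

variable {A M}

instance : AddCommGroup (DAlg A M) :=
  inferInstanceAs (AddCommGroup (ExteriorAlgebra A M × ExteriorAlgebra A M))

/-- Multiplication on `DAlg`. -/
def DAlg.mul (x y : DAlg A M) : DAlg A M :=
  (x.1 * y.1, x.2 * y.1 + CliffordAlgebra.involute x.1 * y.2)

instance : Mul (DAlg A M) := ⟨DAlg.mul⟩

instance : One (DAlg A M) := ⟨((1 : ExteriorAlgebra A M), (0 : ExteriorAlgebra A M))⟩

theorem DAlg.mul_def (x y : DAlg A M) :
    x * y = (x.1 * y.1, x.2 * y.1 + CliffordAlgebra.involute x.1 * y.2) := rfl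

theorem DAlg.one_def : (1 : DAlg A M) = ((1 : ExteriorAlgebra A M), 0) := rfl

theorem DAlg.ext {x y : DAlg A M} (h1 : x.1 = y.1) (h2 : x.2 = y.2) : x = y :=
  Prod.ext h1 h2

theorem DAlg.add_def (x y : DAlg A M) : x + y = (x.1 + y.1, x.2 + y.2) := rfl
theorem DAlg.zero_def : (0 : DAlg A M) = ((0 : ExteriorAlgebra A M), 0) := rfl

theorem DAlg.mul_fst (x y : DAlg A M) : (x * y).1 = x.1 * y.1 := rfl
theorem DAlg.mul_snd (x y : DAlg A M) :
    (x * y).2 = x.2 * y.1 + CliffordAlgebra.involute x.1 * y.2 := rfl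
theorem DAlg.add_fst (x y : DAlg A M) : (x + y).1 = x.1 + y.1 := rfl
theorem DAlg.add_snd (x y : DAlg A M) : (x + y).2 = x.2 + y.2 := rfl
theorem DAlg.one_fst : (1 : DAlg A M).1 = 1 := rfl
theorem DAlg.one_snd : (1 : DAlg A M).2 = 0 := rfl
theorem DAlg.zero_fst : (0 : DAlg A M).1 = 0 := rfl
theorem DAlg.zero_snd : (0 : DAlg A M).2 = 0 := rfl

instance : Ring (DAlg A M) where
  __ := (inferInstance : AddCommGroup (DAlg A M))
  mul := (· * ·)
  one := 1
  mul_assoc x y z := by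
    refine DAlg.ext ?_ ?_ <;>
      simp only [DAlg.mul_fst, DAlg.mul_snd, map_mul, map_add, mul_add, add_mul, mul_assoc] <;> abel
  one_mul x := by
    refine DAlg.ext ?_ ?_ <;> simp [DAlg.mul_fst, DAlg.mul_snd, DAlg.one_fst, DAlg.one_snd]
  mul_one x := by
    refine DAlg.ext ?_ ?_ <;> simp [DAlg.mul_fst, DAlg.mul_snd, DAlg.one_fst, DAlg.one_snd]
  left_distrib x y z := by
    refine DAlg.ext ?_ ?_ <;>
      simp only [DAlg.mul_fst, DAlg.mul_snd, DAlg.add_fst, DAlg.add_snd, map_add, mul_add, add_mul] <;> abel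
  right_distrib x y z := by
    refine DAlg.ext ?_ ?_ <;>
      simp only [DAlg.mul_fst, DAlg.mul_snd, DAlg.add_fst, DAlg.add_snd, map_add, mul_add, add_mul] <;> abel
  zero_mul x := by
    refine DAlg.ext ?_ ?_ <;> simp [DAlg.mul_fst, DAlg.mul_snd, DAlg.zero_fst, DAlg.zero_snd]
  mul_zero x := by
    refine DAlg.ext ?_ ?_ <;> simp [DAlg.mul_fst, DAlg.mul_snd, DAlg.zero_fst, DAlg.zero_snd]

end DAlg

section Main

variable {k A M : Type} [CommRing k] [CommRing A] [Algebra k A]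
    [AddCommGroup M] [Module k M] [Module A M] [IsScalarTower k A M]

/-- The structure map `A → DAlg A M` determined by a derivation `d0 : A → M`. -/
noncomputable def dAlgebraMap (d0 : Derivation k A M) : A →+* DAlg A M where
  toFun a := (algebraMap A (ExteriorAlgebra A M) a, ι A (d0 a))
  map_one' := by
    refine DAlg.ext ?_ ?_ <;> simp [DAlg.one_def]
  map_mul' a b := by
    refine DAlg.ext ?_ ?_
    · exact map_mul (algebraMap A (ExteriorAlgebra A M)) a b
    · simp only [DAlg.mul_def, Derivation.leibniz, map_add, AlgHom.commutes]
      rw [map_smul, map_smul, Algebra.smul_def, Algebra.smul_def, add_comm]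
      congr 1
      rw [← Algebra.commutes]
      show _ = CliffordAlgebra.involute (algebraMap A (ExteriorAlgebra A M) a) * ι A (d0 b)
      rw [AlgHom.commutes]
  map_zero' := by
    refine DAlg.ext ?_ ?_ <;> simp [DAlg.zero_def]
  map_add' a b := by
    refine DAlg.ext ?_ ?_ <;> simp [DAlg.add_def] <;> rfl

theorem dAlgebraMap_central (d0 : Derivation k A M) (a : A) (x : DAlg A M) :
    dAlgebraMap d0 a * x = x * dAlgebraMap d0 a := by
  refine DAlg.ext ?_ ?_
  · exact Algebra.commutes a x.1
  · show ι A (d0 a) * x.1 + CliffordAlgebra.involute (algebraMap A _ a) * x.2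
      = x.2 * algebraMap A _ a + CliffordAlgebra.involute x.1 * ι A (d0 a)
    rw [ι_mul_eq_involute_mul, AlgHom.commutes, ← Algebra.commutes a x.2, add_comm]

end Main


/-- a `k`-linear derivation `d₀ : A → M` together with a `k`-linear map
`d₁ : M → Λ²_A M` satisfying the Leibniz rule extends uniquely to a family of `k`-linear
maps `dᵢ : Λ^i_A M → Λ^{i+1}_A M` (packaged as a single `k`-linear degree-one map on the
exterior algebra) satisfying the graded Leibniz rule. -/
theorem stmt_0 {k A M : Type} [CommRing k] [CommRing A] [Algebra k A]
    [AddCommGroup M] [Module k M] [Module A M] [IsScalarTower k A M]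
    (d0 : Derivation k A M)
    (d1 : M →ₗ[k] ExteriorAlgebra A M)
    (hd1range : ∀ m : M, d1 m ∈ degreePiece A M 2)
    (hLeib1 : ∀ (a : A) (m : M),
      d1 (a • m) = algebraMap A (ExteriorAlgebra A M) a * d1 m
        + ExteriorAlgebra.ι A (d0 a) * ExteriorAlgebra.ι A m) :
    ∃! δ : ExteriorAlgebra A M →ₗ[k] ExteriorAlgebra A M,
      (∀ (i : ℕ) (x : ExteriorAlgebra A M),
          x ∈ degreePiece A M i → δ x ∈ degreePiece A M (i + 1))
      ∧ (∀ a : A, δ (algebraMap A (ExteriorAlgebra A M) a) = ExteriorAlgebra.ι A (d0 a))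
      ∧ (∀ m : M, δ (ExteriorAlgebra.ι A m) = d1 m)
      ∧ (∀ (i : ℕ) (x y : ExteriorAlgebra A M), x ∈ degreePiece A M i →
          δ (x * y) = δ x * y + ((-1 : ℤ) ^ i) • (x * δ y)) := by
  letI : Algebra A (DAlg A M) :=
    RingHom.toAlgebra' (dAlgebraMap d0) (dAlgebraMap_central d0)
  have halgmap : ∀ a : A, algebraMap A (DAlg A M) a = dAlgebraMap d0 a := fun _ => rfl
  -- the A-linear map M → DAlg
  set f : M →ₗ[A] DAlg A M :=
    { toFun := fun m => (ι A m, d1 m)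
      map_add' := fun m n => by refine DAlg.ext ?_ ?_ <;> simp [DAlg.add_def] <;> rfl
      map_smul' := fun a m => by
        rw [RingHom.id_apply]
        refine DAlg.ext ?_ ?_
        · show ι A (a • m) = algebraMap A (ExteriorAlgebra A M) a * ι A m
          rw [map_smul, Algebra.smul_def]
        · show d1 (a • m) = ι A (d0 a) * ι A m
            + CliffordAlgebra.involute (algebraMap A (ExteriorAlgebra A M) a) * d1 m
          rw [hLeib1, AlgHom.commutes, add_comm] } with hf
  have hsq : ∀ m : M, f m * f m = 0 := by
    intro m
    refine DAlg.ext ?_ ?_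
    · show ι A m * ι A m = 0
      exact ι_sq_zero m
    · show d1 m * ι A m + CliffordAlgebra.involute (ι A m) * d1 m = 0
      rw [CliffordAlgebra.involute_ι, neg_mul, ι_mul_eq_involute_mul m (d1 m),
        involute_of_mem_pow (hd1range m)]
      norm_num
  set Φ : ExteriorAlgebra A M →ₐ[A] DAlg A M := ExteriorAlgebra.lift A ⟨f, hsq⟩ with hΦ
  have hΦι : ∀ m : M, Φ (ι A m) = f m := fun m => by
    rw [hΦ]; exact ExteriorAlgebra.lift_ι_apply (R := A) f hsq m
  have hfst : ∀ x : ExteriorAlgebra A M, (Φ x).1 = x := by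
    intro x
    induction x using ExteriorAlgebra.induction with
    | algebraMap r => rw [AlgHom.commutes, halgmap]; rfl
    | ι m => rw [hΦι]; rfl
    | mul x y hx hy => rw [map_mul]; show (Φ x).1 * (Φ y).1 = x * y; rw [hx, hy]
    | add x y hx hy => rw [map_add]; show (Φ x).1 + (Φ y).1 = x + y; rw [hx, hy]
  -- the candidate map, as a bare function
  set δ0 : ExteriorAlgebra A M → ExteriorAlgebra A M := fun x => (Φ x).2 with hδ0
  have halg : ∀ a : A, δ0 (algebraMap A (ExteriorAlgebra A M) a) = ι A (d0 a) := by
    intro a; show (Φ (algebraMap A _ a)).2 = _; rw [AlgHom.commutes, halgmap]; rfl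
  have hι : ∀ m : M, δ0 (ι A m) = d1 m := by
    intro m; show (Φ (ι A m)).2 = _; rw [hΦι, hf]; rfl
  have hmul : ∀ x y : ExteriorAlgebra A M,
      δ0 (x * y) = δ0 x * y + CliffordAlgebra.involute x * δ0 y := by
    intro x y
    show (Φ (x * y)).2 = (Φ x).2 * y + CliffordAlgebra.involute x * (Φ y).2
    rw [map_mul]
    show (Φ x).2 * (Φ y).1 + CliffordAlgebra.involute (Φ x).1 * (Φ y).2 = _
    rw [hfst, hfst]
  have hadd : ∀ x y : ExteriorAlgebra A M, δ0 (x + y) = δ0 x + δ0 y := by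
    intro x y; show (Φ (x + y)).2 = _; rw [map_add]; rfl
  have hsmulA : ∀ (a : A) (x : ExteriorAlgebra A M),
      δ0 (a • x) = ι A (d0 a) * x + a • δ0 x := by
    intro a x
    rw [Algebra.smul_def, hmul, halg, AlgHom.commutes, ← Algebra.smul_def]
  set δ : ExteriorAlgebra A M →ₗ[k] ExteriorAlgebra A M :=
    { toFun := δ0
      map_add' := hadd
      map_smul' := fun c x => by
        show δ0 (c • x) = (RingHom.id k) c • δ0 x
        rw [RingHom.id_apply, ← algebraMap_smul A c x, hsmulA, Derivation.map_algebraMap,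
          map_zero, zero_mul, zero_add, algebraMap_smul] } with hδ
  have hδapp : ∀ x, δ x = δ0 x := fun _ => rfl
  have halgδ : ∀ a : A, δ (algebraMap A (ExteriorAlgebra A M) a) = ι A (d0 a) :=
    fun a => halg a
  have hιδ : ∀ m : M, δ (ι A m) = d1 m := fun m => hι m
  -- graded Leibniz rule
  have hLeib : ∀ (i : ℕ) (x y : ExteriorAlgebra A M), x ∈ degreePiece A M i →
      δ (x * y) = δ x * y + ((-1 : ℤ) ^ i) • (x * δ y) := by
    intro i x y hx
    rw [hδapp, hδapp, hδapp, hmul, involute_of_mem_pow hx, smul_mul_assoc]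
  -- membership facts
  have mem0 : ∀ a : A, algebraMap A (ExteriorAlgebra A M) a ∈ degreePiece A M 0 := by
    intro a
    show _ ∈ _ ^ 0
    rw [pow_zero]
    exact Submodule.algebraMap_mem a
  have mem1 : ∀ m : M, ι A m ∈ degreePiece A M 1 := by
    intro m
    show _ ∈ _ ^ 1
    rw [pow_one]
    exact LinearMap.mem_range_self _ m
  -- degree raising
  have hdeg : ∀ (i : ℕ) (x : ExteriorAlgebra A M),
      x ∈ degreePiece A M i → δ x ∈ degreePiece A M (i + 1) := by
    intro i x hx
    show δ x ∈ _ ^ (i + 1)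
    induction hx using Submodule.pow_induction_on_left' with
    | algebraMap r =>
      rw [pow_one, halgδ]
      exact LinearMap.mem_range_self _ _
    | add x y i hx hy ihx ihy => rw [map_add]; exact add_mem ihx ihy
    | mem_mul m hm i x hx ih =>
      obtain ⟨v, rfl⟩ := hm
      rw [hLeib 1 (ι A v) x (mem1 v), hιδ]
      refine add_mem ?_ ?_
      · have h2 : d1 v * x ∈ (LinearMap.range (ι A : M →ₗ[A] ExteriorAlgebra A M)) ^ 2 *
            (LinearMap.range (ι A : M →ₗ[A] ExteriorAlgebra A M)) ^ i :=
          Submodule.mul_mem_mul (hd1range v) hx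
        rw [← pow_add] at h2
        convert h2 using 2
        omega
      · rw [pow_one, neg_one_zsmul]
        refine neg_mem ?_
        have h2 : ι A v * δ x ∈ (LinearMap.range (ι A : M →ₗ[A] ExteriorAlgebra A M)) ^ 1 *
            (LinearMap.range (ι A : M →ₗ[A] ExteriorAlgebra A M)) ^ (i + 1) :=
          Submodule.mul_mem_mul (by
            rw [pow_one]; exact LinearMap.mem_range_self _ v) ih
        rw [← pow_add] at h2
        convert h2 using 2
        omega
  refine ⟨δ, ⟨hdeg, fun a => halg a, fun m => hι m, hLeib⟩, ?_⟩
  -- uniqueness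
  rintro δ' ⟨_, halg', hι', hLeib'⟩
  have key2 : ∀ x y : ExteriorAlgebra A M, δ' y = δ y → δ' (x * y) = δ (x * y) := by
    intro x
    induction x using ExteriorAlgebra.induction with
    | algebraMap a =>
      intro y hy
      rw [hLeib' 0 _ y (mem0 a), hLeib 0 _ y (mem0 a), halg' a, halgδ a, hy]
    | ι m =>
      intro y hy
      rw [hLeib' 1 _ y (mem1 m), hLeib 1 _ y (mem1 m), hι' m, hιδ m, hy]
    | mul x₁ x₂ ih1 ih2 =>
      intro y hy
      rw [mul_assoc]
      exact ih1 _ (ih2 _ hy)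
    | add x₁ x₂ ih1 ih2 =>
      intro y hy
      rw [add_mul, map_add, map_add, ih1 _ hy, ih2 _ hy]
  have h1 : δ' 1 = δ 1 := by
    rw [← map_one (algebraMap A (ExteriorAlgebra A M)), halg' 1, halgδ 1]
  ext x
  rw [← mul_one x]
  exact key2 x 1 h1
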